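/- Let H be a unicyclic graph (connected, n vertices, n edges) with connection coefficients φ and cycle holonomy w. With α_{ij} = u_i − φ_{ij} u_j, the Gram determinant det G(A_H, A_H) equals (1−w)^2 · ∏ φ_{ij}^2, where the product is over the edges in the trees attached to the cycle (the 'antlers') directed away from the cycle. In particular, if w = 1 then the vectors {α_{ij}} over the edges of H are linearly dependent. -/

import Mathlib

open Matrix

open scoped Classical

/-- Cyclic successor on `Fin s`. -/
def cycSucc {s : ℕ} (h : 0 < s) (i : Fin s) : Fin s := ⟨(i.val + 1) % s, Nat.mod_lt _ h⟩

/-- Determinant of a matrix which is "triangular" with respect to a depth function. -/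
lemma det_tri {T : Type*} [Fintype T] [DecidableEq T] (d : T → ℕ)
    (D : Matrix T T ℝ) (g : T → ℝ)
    (hdiag : ∀ v, D v v = g v)
    (hoff : ∀ v u, v ≠ u → D v u ≠ 0 → d u < d v) :
    D.det = ∏ v, g v := by
  rw [Matrix.det_apply']
  rw [Finset.sum_eq_single (1 : Equiv.Perm T)]
  · simp [hdiag]
  · intro σ _ hσ
    rcases not_forall.1 (mt Equiv.ext hσ) with ⟨i₀, hi₀⟩
    have hprod : ∏ i, D (σ i) i = 0 := by
      by_contra hne
      have hfac : ∀ i, D (σ i) i ≠ 0 := fun i hi =>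
        hne (Finset.prod_eq_zero (Finset.mem_univ i) hi)
      have hle : ∀ i ∈ Finset.univ, d i ≤ d (σ i) := by
        intro i _
        by_cases h : σ i = i
        · rw [h]
        · exact (hoff _ _ h (hfac i)).le
      have hlt : ∑ i, d i < ∑ i, d (σ i) :=
        Finset.sum_lt_sum hle ⟨i₀, Finset.mem_univ _, hoff _ _ hi₀ (hfac i₀)⟩
      rw [Equiv.sum_comp σ d] at hlt
      exact lt_irrefl _ hlt
    rw [hprod, mul_zero]
  · simp

open Fin.NatCast in
/-- Determinant of the (weighted) cycle matrix `1 - shift`. -/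
lemma det_cyc {m : ℕ} (hm : 1 ≤ m) (g : Fin (m + 1) → ℝ)
    (A : Matrix (Fin (m + 1)) (Fin (m + 1)) ℝ)
    (hA : ∀ i j, A i j = (if j = i then 1 else 0) - g i * (if j = i + 1 then 1 else 0)) :
    A.det = 1 - ∏ i, g i := by
  have hone : (1 : Fin (m + 1)) ≠ 0 := by
    simp [Fin.ext_iff, Fin.val_one, Nat.mod_eq_of_lt (by omega : 1 < m + 1)]
  set ρ : Equiv.Perm (Fin (m + 1)) := finRotate (m + 1) with hρ
  have hρa : ∀ i, ρ i = i + 1 := fun i => finRotate_succ_apply i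
  have hρinv : ∀ i, ρ⁻¹ i = i - 1 := by
    intro i
    apply ρ.injective
    rw [show ρ (ρ⁻¹ i) = i from (Equiv.eq_symm_apply ρ).mp rfl, hρa, sub_add_cancel]
  have h1ρ : (1 : Equiv.Perm (Fin (m + 1))) ≠ ρ⁻¹ := by
    intro h
    have := congrArg (fun σ : Equiv.Perm (Fin (m+1)) => σ 0) h
    simp only [Equiv.Perm.one_apply, hρinv] at this
    exact hone (by rw [eq_sub_iff_add_eq] at this; simpa using this.symm)
  rw [Matrix.det_apply']
  have hvanish : ∀ σ ∈ Finset.univ, σ ∉ ({1, ρ⁻¹} : Finset (Equiv.Perm (Fin (m+1)))) →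
      ((Equiv.Perm.sign σ : ℤ) : ℝ) * ∏ i, A (σ i) i = 0 := by
    intro σ _ hσ
    simp only [Finset.mem_insert, Finset.mem_singleton, not_or] at hσ
    obtain ⟨hσ1, hσρ⟩ := hσ
    have hprod : ∏ i, A (σ i) i = 0 := by
      by_contra hne
      have hfac : ∀ i, A (σ i) i ≠ 0 := fun i hi =>
        hne (Finset.prod_eq_zero (Finset.mem_univ i) hi)
      have hstep : ∀ i, σ i = i ∨ σ i = i - 1 := by
        intro i
        have := hfac i
        rw [hA] at this
        by_cases h1 : i = σ i
        · exact Or.inl h1.symm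
        · by_cases h2 : i = σ i + 1
          · exact Or.inr (eq_sub_of_add_eq h2.symm)
          · simp [h1, h2] at this
      by_cases hfix : ∃ i₀, σ i₀ = i₀
      · obtain ⟨i₀, hi₀⟩ := hfix
        have hall : ∀ k : ℕ, σ (i₀ + (k : Fin (m+1))) = i₀ + (k : Fin (m+1)) := by
          intro k
          induction k with
          | zero => simpa using hi₀
          | succ k ih =>
            have hcast : ((k + 1 : ℕ) : Fin (m + 1)) = (k : Fin (m+1)) + 1 := by
              push_cast; ring
            rw [hcast, ← add_assoc]
            rcases hstep (i₀ + (k : Fin (m+1)) + 1) with h | h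
            · exact h
            · exfalso
              rw [add_sub_cancel_right] at h
              have := σ.injective (h.trans ih.symm)
              exact hone (by simpa using left_eq_add.mp this.symm)
        apply hσ1
        refine Equiv.ext fun j => ?_
        have := hall ((j - i₀ : Fin (m+1)).val)
        rw [Fin.cast_val_eq_self, add_sub_cancel] at this
        simpa using this
      · push_neg at hfix
        apply hσρ
        refine Equiv.ext fun i => ?_
        rcases hstep i with h | h
        · exact absurd h (hfix i)
        · rw [h, hρinv]
    rw [hprod, mul_zero]
  rw [← Finset.sum_subset (Finset.subset_univ ({1, ρ⁻¹} : Finset (Equiv.Perm (Fin (m+1)))))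
    (fun σ hσu hσ => hvanish σ hσu hσ)]
  rw [Finset.sum_pair h1ρ]
  have hterm1 : ((Equiv.Perm.sign (1 : Equiv.Perm (Fin (m+1))) : ℤ) : ℝ) *
      ∏ i, A ((1 : Equiv.Perm (Fin (m+1))) i) i = 1 := by
    simp [hA, left_eq_add, hone]
  have hterm2 : ((Equiv.Perm.sign ρ⁻¹ : ℤ) : ℝ) * ∏ i, A (ρ⁻¹ i) i = - ∏ i, g i := by
    have hsign : Equiv.Perm.sign ρ⁻¹ = (-1 : ℤˣ) ^ m := by
      rw [Equiv.Perm.sign_inv, hρ, sign_finRotate, Nat.add_sub_cancel]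
    have hentry : ∀ i, A (ρ⁻¹ i) i = - g (i - 1) := by
      intro i
      rw [hρinv, hA]
      have h1 : i ≠ i - 1 := fun h => hone (sub_eq_self.mp h.symm)
      have h2 : i = i - 1 + 1 := by rw [sub_add_cancel]
      simp [if_neg h1, if_pos h2]
    have hprod : ∏ i, A (ρ⁻¹ i) i = ∏ i, (- g i) := by
      rw [Finset.prod_congr rfl (fun i _ => hentry i)]
      exact Fintype.prod_equiv (Equiv.subRight (1 : Fin (m+1))) _ _ (fun i => rfl)
    have hneg : ∏ i : Fin (m+1), -g i = (-1 : ℝ)^(m+1) * ∏ i, g i := by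
      have h : ∀ i : Fin (m+1), -g i = (-1 : ℝ) * g i := fun i => by ring
      rw [Finset.prod_congr rfl fun i _ => h i, Finset.prod_mul_distrib, Finset.prod_const]
      simp
    have hsign' : ((Equiv.Perm.sign ρ⁻¹ : ℤ) : ℝ) = (-1 : ℝ) ^ m := by
      rw [hsign]; push_cast; norm_num
    rw [hprod, hsign', hneg, ← mul_assoc, ← pow_add]
    have : m + (m + 1) = 2 * m + 1 := by ring
    rw [this, pow_succ, pow_mul]
    simp
  rw [hterm1, hterm2]
  ring

/-- For a unicyclic graph on `Fin n` — a cycle `c 0, c 1, ..., c (s-1)` with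
trees ("antlers") attached, encoded by a parent function `par` pointing towards the cycle —
with connection `φ` and cycle holonomy `w`, the Gram determinant of the vectors
`α_{ij} = u_i - φ i j • u_j` over all edges (cycle edges directed along the cycle, antler
edges directed away from the cycle) equals `(1-w)^2 · ∏ φ^2` over the antler edges directed
away from the cycle; in particular if `w = 1` the vectors `α` are linearly dependent. -/
theorem det_P_unicyclic (n s : ℕ) (hs : 3 ≤ s)
    (φ : Fin n → Fin n → ℝ)
    (hφnz : ∀ i j, φ i j ≠ 0)
    (hφinv : ∀ i j, φ j i = (φ i j)⁻¹)
    (c : Fin s → Fin n) (hc : Function.Injective c)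
    (par : Fin n → Fin n) (dep : Fin n → ℕ)
    (hpar0 : ∀ i, par (c i) = c i) (hdep0 : ∀ i, dep (c i) = 0)
    (hdep : ∀ v, (¬ ∃ i, c i = v) → dep v = dep (par v) + 1)
    (w : ℝ) (hw : w = ∏ i : Fin s, φ (c i) (c (cycSucc (by omega) i)))
    (α : Fin s ⊕ {v : Fin n // ¬ ∃ i, c i = v} → (Fin n → ℝ))
    (hα₁ : ∀ i, α (Sum.inl i) = (Pi.single (c i) 1 : Fin n → ℝ)
      - φ (c i) (c (cycSucc (by omega) i)) • (Pi.single (c (cycSucc (by omega) i)) 1 : Fin n → ℝ))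
    (hα₂ : ∀ v, α (Sum.inr v) = (Pi.single (par v.1) 1 : Fin n → ℝ)
      - φ (par v.1) v.1 • (Pi.single v.1 1 : Fin n → ℝ)) :
    (Matrix.of fun a b => α a ⬝ᵥ α b).det
        = (1 - w) ^ 2 * ∏ v : {v : Fin n // ¬ ∃ i, c i = v}, (φ (par v.1) v.1) ^ 2
      ∧ (w = 1 → ¬ LinearIndependent ℝ α) := by
  obtain ⟨m, rfl⟩ : ∃ m, s = m + 1 := ⟨s - 1, by omega⟩
  have hm : 1 ≤ m := by omega
  have hpos : 0 < m + 1 := by omega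
  -- the bijection between edge indices and vertices
  let f : Fin (m+1) ⊕ {v : Fin n // ¬ ∃ i, c i = v} → Fin n := Sum.elim c Subtype.val
  have hfinj : Function.Injective f := by
    rintro (i | v) (j | u) h
    · exact congrArg Sum.inl (hc h)
    · exact absurd ⟨i, h⟩ u.2
    · exact absurd ⟨j, h.symm⟩ v.2
    · exact congrArg Sum.inr (Subtype.ext h)
  have hfsurj : Function.Surjective f := by
    intro v
    by_cases h : ∃ i, c i = v
    · obtain ⟨i, hi⟩ := h; exact ⟨Sum.inl i, hi⟩
    · exact ⟨Sum.inr ⟨v, h⟩, rfl⟩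
  set N : Matrix (Fin (m+1) ⊕ {v : Fin n // ¬ ∃ i, c i = v}) (Fin (m+1) ⊕ {v : Fin n // ¬ ∃ i, c i = v}) ℝ := Matrix.of fun a b => α a (f b) with hN
  have hGram : (Matrix.of fun a b => α a ⬝ᵥ α b) = N * Nᵀ := by
    ext a b
    simp only [Matrix.mul_apply, Matrix.of_apply, Matrix.transpose_apply, dotProduct, hN]
    exact (Fintype.sum_bijective f ⟨hfinj, hfsurj⟩ _ _ (fun j => rfl)).symm
  -- block structure
  set g : Fin (m+1) → ℝ := fun i => φ (c i) (c (cycSucc hpos i)) with hg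
  set A : Matrix (Fin (m+1)) (Fin (m+1)) ℝ := Matrix.of fun i j => α (Sum.inl i) (c j) with hAdef
  set B : Matrix {v : Fin n // ¬ ∃ i, c i = v} (Fin (m+1)) ℝ := Matrix.of fun v i => α (Sum.inr v) (c i) with hBdef
  set D : Matrix {v : Fin n // ¬ ∃ i, c i = v} {v : Fin n // ¬ ∃ i, c i = v} ℝ := Matrix.of fun v u => α (Sum.inr v) u.1 with hDdef
  have hcyc : ∀ i : Fin (m+1), cycSucc hpos i = i + 1 := by
    intro i
    apply Fin.ext
    simp only [cycSucc, Fin.add_def, Fin.val_one']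
    rw [Nat.mod_eq_of_lt (show 1 < m + 1 by omega)]
  have hblocks : N = Matrix.fromBlocks A 0 B D := by
    ext a b
    cases a with
    | inl i =>
      cases b with
      | inl j => rfl
      | inr v =>
        show α (Sum.inl i) v.1 = 0
        rw [hα₁ i]
        have h1 : v.1 ≠ c i := fun h => v.2 ⟨i, h.symm⟩
        have h2 : v.1 ≠ c (cycSucc (by omega) i) := fun h => v.2 ⟨_, h.symm⟩
        simp [Pi.single_apply, h1, h2]
    | inr v =>
      cases b with
      | inl j => rfl
      | inr u => rfl
  have hA : ∀ i j, A i j = (if j = i then 1 else 0) - g i * (if j = i + 1 then 1 else 0) := by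
    intro i j
    show α (Sum.inl i) (c j) = _
    rw [hα₁ i]
    simp only [Pi.sub_apply, Pi.smul_apply, smul_eq_mul, Pi.single_apply, hc.eq_iff]
    simp only [hg, hcyc]
  have hdetA : A.det = 1 - w := by
    rw [det_cyc hm g A hA, hw]
  have hpar_ne : ∀ v : {v : Fin n // ¬ ∃ i, c i = v}, par v.1 ≠ v.1 := by
    intro v h
    have := hdep v.1 v.2
    rw [h] at this
    omega
  have hdetD : D.det = ∏ v : {v : Fin n // ¬ ∃ i, c i = v}, -(φ (par v.1) v.1) := by
    apply det_tri (fun v => dep v.1)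
    · intro v
      show α (Sum.inr v) v.1 = _
      rw [hα₂ v]
      simp [Pi.single_apply, (hpar_ne v).symm]
    · intro v u hvu hne
      have huv : u.1 ≠ v.1 := fun h => hvu (Subtype.ext h).symm
      have : α (Sum.inr v) u.1 ≠ 0 := hne
      rw [hα₂ v] at this
      simp only [Pi.sub_apply, Pi.smul_apply, smul_eq_mul, Pi.single_apply, if_neg huv,
        mul_zero, sub_zero] at this
      have hu : u.1 = par v.1 := by
        by_contra h
        simp [h] at this
      have := hdep v.1 v.2
      rw [← hu] at this
      omega
  have hdetN : N.det = (1 - w) * ∏ v : {v : Fin n // ¬ ∃ i, c i = v}, -(φ (par v.1) v.1) := by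
    rw [hblocks, Matrix.det_fromBlocks_zero₁₂, hdetA, hdetD]
  constructor
  · rw [hGram, Matrix.det_mul, Matrix.det_transpose, hdetN]
    have : ((1 - w) * ∏ v : {v : Fin n // ¬ ∃ i, c i = v}, -(φ (par v.1) v.1)) *
          ((1 - w) * ∏ v : {v : Fin n // ¬ ∃ i, c i = v}, -(φ (par v.1) v.1))
        = (1 - w) ^ 2 * (∏ v : {v : Fin n // ¬ ∃ i, c i = v}, -(φ (par v.1) v.1)) ^ 2 := by ring
    rw [this, ← Finset.prod_pow]
    congr 1
    exact Finset.prod_congr rfl fun v _ => neg_sq _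
  · intro hw1 hli
    have hNdet : N.det = 0 := by rw [hdetN, hw1]; ring
    have hker : LinearMap.ker (LinearMap.funLeft ℝ ℝ f) = ⊥ :=
      LinearMap.ker_eq_bot.mpr (LinearMap.funLeft_injective_of_surjective ℝ ℝ f hfsurj)
    have hrows : LinearIndependent ℝ (fun a => N a) := by
      have hmap := hli.map' (LinearMap.funLeft ℝ ℝ f) hker
      have heq : (fun a => N a) = (⇑(LinearMap.funLeft ℝ ℝ f) ∘ α) := rfl
      rw [heq]
      exact hmap
    have hunit : IsUnit N := Matrix.linearIndependent_rows_iff_isUnit.mp hrows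
    exact ((Matrix.isUnit_iff_isUnit_det N).mp hunit).ne_zero hNdet
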